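/- (First-order entropy change under natural policy gradient) Let π be a softmax policy with logits z over finite A, and update the logits by δ(a) = η · Adv(a). Then the first-order change in entropy equals −η · Cov_{a∼π}(log π(a), Adv(a)). -/

import Mathlib

open Finset

noncomputable def softmax {A : Type*} [Fintype A] (z : A → ℝ) (a : A) : ℝ :=
  Real.exp (z a) / ∑ a', Real.exp (z a')

noncomputable def entropy {A : Type*} [Fintype A] (p : A → ℝ) : ℝ :=
  -∑ a, p a * Real.log (p a)

noncomputable def cov {A : Type*} [Fintype A] (p f g : A → ℝ) : ℝ :=
  (∑ a, p a * (f a * g a)) - (∑ a, p a * f a) * (∑ a, p a * g a)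

/-- First-order entropy change under the natural-policy-gradient logit update
`δ a = η * Adv a` equals `−η · Cov_{a∼π}(log π a, Adv a)`. -/
theorem stmt5 {A : Type*} [Fintype A] [Nonempty A]
    (z : A → ℝ) (π Adv : A → ℝ) (hπ : π = softmax z) (η : ℝ) :
    HasDerivAt
      (fun t : ℝ => entropy (softmax (fun a => z a + t * (η * Adv a))))
      (-(η * cov π (fun a => Real.log (π a)) Adv)) 0 := by
  have hS0 : (0:ℝ) < ∑ a', Real.exp (z a') :=
    Finset.sum_pos (fun a _ => Real.exp_pos _) Finset.univ_nonempty
  have hπa : ∀ a, π a = Real.exp (z a) / ∑ a', Real.exp (z a') := by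
    intro a; rw [hπ]; rfl
  have hπpos : ∀ a, 0 < π a := fun a => by
    rw [hπa]; exact div_pos (Real.exp_pos _) hS0
  have hsum1 : ∑ a, π a = 1 := by
    simp only [hπa]; rw [← Finset.sum_div]; field_simp
  set E : ℝ := ∑ a', π a' * (η * Adv a') with hE
  -- derivative of the normalizer
  have hderivS : HasDerivAt (fun t : ℝ => ∑ a', Real.exp (z a' + t * (η * Adv a')))
      (∑ a', Real.exp (z a') * (η * Adv a')) 0 := by
    apply HasDerivAt.fun_sum
    intro a _
    have h1 : HasDerivAt (fun t : ℝ => z a + t * (η * Adv a)) (η * Adv a) 0 := by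
      simpa using ((hasDerivAt_id (0:ℝ)).mul_const (η * Adv a)).const_add (z a)
    simpa using h1.exp
  have hS0' : (∑ a', Real.exp (z a' + 0 * (η * Adv a'))) ≠ 0 := by
    have : ∀ a', z a' + 0 * (η * Adv a') = z a' := by intro a'; ring
    simp only [this]; exact ne_of_gt hS0
  -- derivative of each softmax coordinate
  have hP : ∀ a, HasDerivAt (fun t : ℝ => softmax (fun a' => z a' + t * (η * Adv a')) a)
      (π a * (η * Adv a - E)) 0 := by
    intro a
    have hnum : HasDerivAt (fun t : ℝ => Real.exp (z a + t * (η * Adv a)))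
        (Real.exp (z a) * (η * Adv a)) 0 := by
      have h1 : HasDerivAt (fun t : ℝ => z a + t * (η * Adv a)) (η * Adv a) 0 := by
        simpa using ((hasDerivAt_id (0:ℝ)).mul_const (η * Adv a)).const_add (z a)
      simpa using h1.exp
    have hdiv := hnum.fun_div hderivS hS0'
    have heq : (fun t : ℝ => softmax (fun a' => z a' + t * (η * Adv a')) a)
        = fun t : ℝ => Real.exp (z a + t * (η * Adv a)) /
            ∑ a', Real.exp (z a' + t * (η * Adv a')) := rfl
    rw [heq]
    refine hdiv.congr_deriv ?_
    symm
    have hz : ∀ a', z a' + 0 * (η * Adv a') = z a' := by intro a'; ring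
    simp only [hz]
    have hEeq : E = (∑ a', Real.exp (z a') * (η * Adv a')) / ∑ a', Real.exp (z a') := by
      rw [hE, eq_div_iff (ne_of_gt hS0), Finset.sum_mul]
      exact Finset.sum_congr rfl fun a' _ => by rw [hπa a']; field_simp
    rw [hπa a, hEeq]
    field_simp
  -- derivative of entropy
  have h0eq : softmax (fun a' => z a' + 0 * (η * Adv a')) = π := by
    rw [hπ]
    have hz : (fun a' => z a' + 0 * (η * Adv a')) = z := by funext a'; ring
    rw [hz]
  have hH : HasDerivAt (fun t : ℝ => entropy (softmax (fun a' => z a' + t * (η * Adv a'))))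
      (-∑ a, ((π a * (η * Adv a - E)) * Real.log (π a) + (π a * (η * Adv a - E)))) 0 := by
    unfold entropy
    apply HasDerivAt.neg
    apply HasDerivAt.fun_sum
    intro a _
    have hp := hP a
    have hlog : HasDerivAt
        (fun t : ℝ => Real.log (softmax (fun a' => z a' + t * (η * Adv a')) a))
        ((π a * (η * Adv a - E)) / π a) 0 := by
      have h := hp.log (by rw [h0eq]; exact ne_of_gt (hπpos a))
      rw [h0eq] at h
      exact h
    have := hp.fun_mul hlog
    rw [h0eq] at this
    refine this.congr_deriv ?_
    symm
    have hne : π a ≠ 0 := ne_of_gt (hπpos a)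
    field_simp
  convert hH using 1
  unfold cov
  have expand : ∑ a, ((π a * (η * Adv a - E)) * Real.log (π a) + (π a * (η * Adv a - E)))
      = η * (∑ a, π a * (Real.log (π a) * Adv a)) + (∑ a, π a * (η * Adv a))
        - E * (∑ a, π a * Real.log (π a)) - E * (∑ a, π a) := by
    rw [Finset.mul_sum, Finset.mul_sum, Finset.mul_sum]
    rw [← Finset.sum_add_distrib, ← Finset.sum_sub_distrib, ← Finset.sum_sub_distrib]
    exact Finset.sum_congr rfl fun a _ => by ring
  rw [expand, ← hE, hsum1]
  have hEeq2 : E = η * ∑ a, π a * Adv a := by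
    rw [hE, Finset.mul_sum]; exact Finset.sum_congr rfl fun a _ => by ring
  rw [hEeq2]
  ring
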